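/- For every pair j, k ∈ {1,2,3,4} with j ≠ k, the states ψ±_jk = (Ψ_j ± i Ψ_k)/√2 are unit vectors with concurrence 0 (hence product states), and ψ+_jk is orthogonal to ψ−_jk. -/

import Mathlib

open Matrix Complex
open scoped Matrix Kronecker

noncomputable section

/-- computational basis vector |ab⟩ of ℂ⁴ = ℂ²⊗ℂ², indexed by pairs -/
def ket (a b : Fin 2) : Fin 2 × Fin 2 → ℂ := fun p => if p = (a, b) then 1 else 0

/-- the magic basis Ψ₁, Ψ₂, Ψ₃, Ψ₄ -/
def Psi : Fin 4 → (Fin 2 × Fin 2 → ℂ) :=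
  ![((Real.sqrt 2 : ℂ))⁻¹ • (ket 0 0 + ket 1 1),
    (Complex.I * ((Real.sqrt 2 : ℂ))⁻¹) • (ket 0 1 + ket 1 0),
    ((Real.sqrt 2 : ℂ))⁻¹ • (ket 0 1 - ket 1 0),
    (Complex.I * ((Real.sqrt 2 : ℂ))⁻¹) • (ket 0 0 - ket 1 1)]

/-- concurrence C = 2|αδ − βγ| of a two-qubit state with components (α,β,γ,δ) -/
def conc (v : Fin 2 × Fin 2 → ℂ) : ℝ :=
  2 * ‖v (0, 0) * v (1, 1) - v (0, 1) * v (1, 0)‖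

/-- hermitian inner product on ℂ⁴ -/
def ip (v w : Fin 2 × Fin 2 → ℂ) : ℂ :=
  ∑ p : Fin 2 × Fin 2, (starRingEnd ℂ) (v p) * w p

set_option maxHeartbeats 2000000 in
/-- For j ≠ k, the states ψ±_jk = (Ψ_j ± iΨ_k)/√2 are orthogonal unit vectors
with concurrence 0 (hence product states). -/
theorem stmt4 (j k : Fin 4) (hjk : j ≠ k)
    (ψp ψm : Fin 2 × Fin 2 → ℂ)
    (hψp : ψp = ((Real.sqrt 2 : ℂ))⁻¹ • (Psi j + Complex.I • Psi k))
    (hψm : ψm = ((Real.sqrt 2 : ℂ))⁻¹ • (Psi j - Complex.I • Psi k)) :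
    ip ψp ψp = 1 ∧ ip ψm ψm = 1 ∧ conc ψp = 0 ∧ conc ψm = 0 ∧ ip ψp ψm = 0 := by
  have hs : (Real.sqrt 2 : ℂ) * (Real.sqrt 2 : ℂ) = 2 := by
    norm_cast; exact Real.mul_self_sqrt (by norm_num)
  have hs0 : (Real.sqrt 2 : ℂ) ≠ 0 := by norm_cast; positivity
  have h4 : ((Real.sqrt 2 : ℝ) : ℂ)^4 = 4 := by
    norm_cast
    rw [show (Real.sqrt 2)^4 = (Real.sqrt 2 * Real.sqrt 2)^2 by ring, Real.mul_self_sqrt] <;> norm_num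
  have h5 : ((Real.sqrt 2 : ℝ) : ℂ)^5 = ((Real.sqrt 2 : ℝ) : ℂ) * 4 := by
    rw [pow_succ, h4]; ring
  subst hψp hψm
  fin_cases j <;> fin_cases k <;> first
  | exact absurd rfl hjk
  | · simp only [Fin.reduceFinMk, ip, conc, Psi, ket, Fintype.sum_prod_type, Fin.sum_univ_two,
      Matrix.cons_val_zero, Matrix.cons_val_one, Matrix.head_cons, Matrix.cons_val_two,
      Matrix.tail_cons, Matrix.cons_val_three, Pi.smul_apply, Pi.add_apply, Pi.sub_apply,
      smul_eq_mul, _root_.map_mul, map_inv₀, Complex.conj_I, Complex.conj_ofReal,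
      Prod.mk.injEq, if_true, if_false]
      refine ⟨?_, ?_, ?_, ?_, ?_⟩ <;> (try norm_num) <;> (try field_simp) <;>
        (try ring_nf) <;> (try simp [h4, h5, hs]) <;> (try norm_num)
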